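/- Let $0 < \rho < 1$, set $\sigma = \rho^{1/4}$, and let $(Y_s)_{s \ge 0}$ be nonnegative random variables each satisfying $\mathbb{P}(Y_s \ge a) \le \mu/a^4$ for all $a > 0$, where $\mu \ge 0$. Define $T_j = \sum_{s=0}^{j-1} \rho^{(j-s-1)/2} Y_s$. Then for every $a > 0$, $\mathbb{P}(T_j \ge a) \le \frac{\mu}{(1-\rho^{1/4})^4 (1-\rho)\, a^4}$. -/

import Mathlib

open MeasureTheory Finset

/-- Tail bound for an exponentially weighted sum of nonnegative random variables with
polynomial (Markov-type) marginal tails; no joint distribution assumption. -/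
theorem stmt_15 {Ω : Type*} [MeasurableSpace Ω] (μ : Measure Ω) [IsProbabilityMeasure μ]
    (ρ : ℝ) (hρ0 : 0 < ρ) (hρ1 : ρ < 1)
    (Y : ℕ → Ω → ℝ) (hYnn : ∀ s ω, 0 ≤ Y s ω) (m4 : ℝ) (hm4 : 0 ≤ m4)
    (htail : ∀ s : ℕ, ∀ a : ℝ, 0 < a → μ {ω | a ≤ Y s ω} ≤ ENNReal.ofReal (m4 / a ^ 4))
    (j : ℕ) (a : ℝ) (ha : 0 < a) :
    μ {ω | a ≤ ∑ s ∈ range j, Real.sqrt ρ ^ (j - s - 1) * Y s ω} ≤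
      ENNReal.ofReal (m4 / ((1 - ρ ^ ((1 : ℝ) / 4)) ^ 4 * (1 - ρ) * a ^ 4)) := by
  set σ : ℝ := ρ ^ ((1 : ℝ) / 4) with hσdef
  have hσ0 : 0 < σ := Real.rpow_pos_of_pos hρ0 _
  have hσ1 : σ < 1 := Real.rpow_lt_one hρ0.le hρ1 (by norm_num)
  have hσ4 : σ ^ 4 = ρ := by
    rw [hσdef, ← Real.rpow_natCast (ρ ^ ((1 : ℝ) / 4)) 4, ← Real.rpow_mul hρ0.le]
    norm_num
  have hσ2 : σ ^ 2 = Real.sqrt ρ := by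
    rw [hσdef, ← Real.rpow_natCast (ρ ^ ((1 : ℝ) / 4)) 2, ← Real.rpow_mul hρ0.le,
      Real.sqrt_eq_rpow]
    norm_num
  have h1σ : (0:ℝ) < 1 - σ := by linarith
  set b : ℕ → ℝ := fun s => (1 - σ) * a / σ ^ (j - s - 1) with hbdef
  have hbpos : ∀ s, 0 < b s := fun s => div_pos (mul_pos h1σ ha) (pow_pos hσ0 _)
  have hsub : {ω | a ≤ ∑ s ∈ range j, Real.sqrt ρ ^ (j - s - 1) * Y s ω}
      ⊆ ⋃ s ∈ range j, {ω | b s ≤ Y s ω} := by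
    intro ω hω
    simp only [Set.mem_setOf_eq] at hω
    by_contra hc
    simp only [Set.mem_iUnion, Set.mem_setOf_eq, not_exists, not_le] at hc
    have hj : j ≠ 0 := by
      rintro rfl; simp at hω; linarith
    have hlt : ∑ s ∈ range j, Real.sqrt ρ ^ (j - s - 1) * Y s ω
        < ∑ s ∈ range j, Real.sqrt ρ ^ (j - s - 1) * b s := by
      refine Finset.sum_lt_sum_of_nonempty (nonempty_range_iff.mpr hj) fun s hs => ?_
      exact mul_lt_mul_of_pos_left (hc s hs) (pow_pos (Real.sqrt_pos.mpr hρ0) _)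
    have heq : ∑ s ∈ range j, Real.sqrt ρ ^ (j - s - 1) * b s
        = (1 - σ) * a * ∑ s ∈ range j, σ ^ (j - s - 1) := by
      rw [Finset.mul_sum]
      refine Finset.sum_congr rfl fun s hs => ?_
      simp only [hbdef, ← hσ2, ← pow_mul]
      have h2 : σ ^ (2 * (j - s - 1)) = σ ^ (j - s - 1) * σ ^ (j - s - 1) := by
        rw [two_mul, pow_add]
      rw [h2]
      field_simp
    have hrefl : ∑ s ∈ range j, σ ^ (j - s - 1) = ∑ s ∈ range j, σ ^ s := by
      rw [← Finset.sum_range_reflect (fun k => σ ^ k) j]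
      exact Finset.sum_congr rfl fun s hs => by congr 1; omega
    have hgeo : ∑ s ∈ range j, σ ^ s = (1 - σ ^ j) / (1 - σ) := by
      rw [geom_sum_eq (by linarith)]
      rw [div_eq_div_iff (by linarith) (by linarith)]
      ring
    have hσj : 0 ≤ σ ^ j := pow_nonneg hσ0.le _
    have : ∑ s ∈ range j, Real.sqrt ρ ^ (j - s - 1) * b s ≤ a := by
      rw [heq, hrefl, hgeo]
      have : (1 - σ) * a * ((1 - σ ^ j) / (1 - σ)) = a * (1 - σ ^ j) := by
        field_simp
      rw [this]
      nlinarith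
    linarith
  have hρj : 0 ≤ ρ ^ j := pow_nonneg hρ0.le _
  calc μ {ω | a ≤ ∑ s ∈ range j, Real.sqrt ρ ^ (j - s - 1) * Y s ω}
      ≤ ∑ s ∈ range j, μ {ω | b s ≤ Y s ω} :=
        (measure_mono hsub).trans (measure_biUnion_finset_le _ _)
    _ ≤ ∑ s ∈ range j, ENNReal.ofReal (m4 / (b s) ^ 4) :=
        Finset.sum_le_sum fun s _ => htail s _ (hbpos s)
    _ = ENNReal.ofReal (∑ s ∈ range j, m4 / (b s) ^ 4) := by
        rw [ENNReal.ofReal_sum_of_nonneg fun s _ =>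
          div_nonneg hm4 (pow_nonneg (hbpos s).le _)]
    _ ≤ ENNReal.ofReal (m4 / ((1 - σ) ^ 4 * (1 - ρ) * a ^ 4)) := by
        apply ENNReal.ofReal_le_ofReal
        have hterm : ∀ s ∈ range j, m4 / (b s) ^ 4
            = m4 / ((1 - σ) ^ 4 * a ^ 4) * ρ ^ (j - s - 1) := by
          intro s hs
          rw [hbdef]
          have : ((1 - σ) * a / σ ^ (j - s - 1)) ^ 4
              = (1 - σ) ^ 4 * a ^ 4 / ρ ^ (j - s - 1) := by
            rw [div_pow, mul_pow, ← pow_mul, Nat.mul_comm, pow_mul, hσ4]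
          rw [this]
          have hρk : (0:ℝ) < ρ ^ (j - s - 1) := pow_pos hρ0 _
          field_simp
        rw [Finset.sum_congr rfl hterm, ← Finset.mul_sum]
        have hrefl : ∑ s ∈ range j, ρ ^ (j - s - 1) = ∑ s ∈ range j, ρ ^ s := by
          rw [← Finset.sum_range_reflect (fun k => ρ ^ k) j]
          exact Finset.sum_congr rfl fun s hs => by congr 1; omega
        have h1ρ : (0:ℝ) < 1 - ρ := by linarith
        have hgeo : ∑ s ∈ range j, ρ ^ s = (1 - ρ ^ j) / (1 - ρ) := by
          rw [geom_sum_eq (by linarith)]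
          rw [div_eq_div_iff (by linarith) (by linarith)]
          ring
        rw [hrefl, hgeo, ← sub_nonneg]
        have key : m4 / ((1 - σ) ^ 4 * (1 - ρ) * a ^ 4)
            - m4 / ((1 - σ) ^ 4 * a ^ 4) * ((1 - ρ ^ j) / (1 - ρ))
            = m4 / ((1 - σ) ^ 4 * (1 - ρ) * a ^ 4) * ρ ^ j := by
          field_simp
          ring
        rw [key]
        exact mul_nonneg (div_nonneg hm4 (by positivity)) hρj
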